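/- For the product metric dr² + dt² + δ²ds²_n on D² × S^n (flat two-dimensional factor times a round sphere of radius δ), with n ≥ 2 and 0 ≤ p ≤ n-2, every p-plane P in the tangent space satisfies s_{p,n+2}(P) ≥ (n-p)(n-p-1)/δ² > 0. -/

import Mathlib

open Module

/-- Sectional curvature of the product metric `dr² + dt² + δ² ds²_n` on `D² × S^n`,
in an orthonormal frame with indices `0, 1` tangent to the flat `D²` factor and
indices `i ≥ 2` (normalized) directions tangent to the round sphere of radius `δ`:
only planes tangent to the sphere factor contribute, with curvature `1/δ²`. -/
noncomputable def flatSphereK (n : ℕ) (δ : ℝ)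
    (v w : EuclideanSpace ℝ (Fin (n + 2))) : ℝ :=
  (1 / δ ^ 2) *
    (∑ i : Fin (n + 2), ∑ j : Fin (n + 2),
      if 1 < i ∧ i < j then (v i * w j - v j * w i) ^ 2 else 0)

/-- `∑_{i ≠ j} K (e i) (e j)`: the `(p,n+2)`-intermediate scalar curvature when `e`
is an orthonormal basis of the orthogonal complement of a `p`-plane. -/
noncomputable def sSum {m k : ℕ}
    (K : EuclideanSpace ℝ (Fin m) → EuclideanSpace ℝ (Fin m) → ℝ)
    (e : Fin k → EuclideanSpace ℝ (Fin m)) : ℝ :=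
  ∑ i : Fin k, ∑ j : Fin k, if i ≠ j then K (e i) (e j) else 0

/- ### Auxiliary lemmas -/

lemma sum_ite_ne' {k : ℕ} (f : Fin k → Fin k → ℝ) :
    (∑ a : Fin k, ∑ b : Fin k, if a ≠ b then f a b else 0)
      = (∑ a : Fin k, ∑ b : Fin k, f a b) - ∑ a : Fin k, f a a := by
  have h : ∀ a b : Fin k, (if a ≠ b then f a b else 0)
      = f a b - (if b = a then f a b else 0) := by
    intro a b; by_cases h : a = b <;> simp [h, eq_comm]
  simp only [h, Finset.sum_sub_distrib]
  congr 1
  refine Finset.sum_congr rfl fun a _ => ?_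
  simp

lemma sum_pair_sq {k : ℕ} (u v : Fin k → ℝ) :
    (∑ a : Fin k, ∑ b : Fin k, (u a * u b + v a * v b)^2)
      = (∑ a : Fin k, u a^2)^2 + 2*(∑ a : Fin k, u a * v a)^2 + (∑ a : Fin k, v a^2)^2 := by
  have h : ∀ a : Fin k, (∑ b : Fin k, (u a * u b + v a * v b)^2)
      = u a^2 * (∑ b : Fin k, u b^2) + (u a * v a)*(∑ b : Fin k, u b * v b)*2
        + v a^2 * (∑ b : Fin k, v b^2) := by
    intro a
    rw [Finset.sum_congr rfl (fun b _ => show (u a * u b + v a * v b)^2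
      = u a^2 * u b^2 + (u a * v a)*(u b * v b)*2 + v a^2 * v b^2 by ring)]
    simp only [Finset.sum_add_distrib, ← Finset.sum_mul, ← Finset.mul_sum]
  rw [Finset.sum_congr rfl (fun a _ => h a)]
  simp only [Finset.sum_add_distrib, ← Finset.sum_mul, ← Finset.mul_sum]
  ring

lemma lagrange_sum {m : ℕ} (T : Finset (Fin m)) (v w : Fin m → ℝ) :
    ∑ i ∈ T, ∑ j ∈ T, (v i * w j - v j * w i)^2
      = 2*((∑ i ∈ T, v i^2) * (∑ j ∈ T, w j^2) - (∑ i ∈ T, v i * w i)^2) := by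
  have h : ∀ i ∈ T, (∑ j ∈ T, (v i * w j - v j * w i)^2)
      = v i^2 * (∑ j ∈ T, w j^2) - (v i * w i)*(∑ j ∈ T, v j * w j)*2
        + w i^2 * (∑ j ∈ T, v j^2) := by
    intro i _
    rw [Finset.sum_congr rfl (fun j _ => show (v i * w j - v j * w i)^2
      = (v i^2 * w j^2 - (v i * w i)*(v j * w j)*2) + w i^2 * v j^2 by ring)]
    simp only [Finset.sum_add_distrib, Finset.sum_sub_distrib, ← Finset.sum_mul, ← Finset.mul_sum]
  rw [Finset.sum_congr rfl h]
  simp only [Finset.sum_add_distrib, Finset.sum_sub_distrib, ← Finset.sum_mul, ← Finset.mul_sum]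
  ring

lemma flatSphereK_eq (n : ℕ) (δ : ℝ) (v w : EuclideanSpace ℝ (Fin (n+2))) :
    flatSphereK n δ v w = (1/δ^2) *
      ((∑ i ∈ Finset.univ.filter (fun i : Fin (n+2) => 1 < i), v i^2)
        * (∑ i ∈ Finset.univ.filter (fun i : Fin (n+2) => 1 < i), w i^2)
        - (∑ i ∈ Finset.univ.filter (fun i : Fin (n+2) => 1 < i), v i * w i)^2) := by
  set T := Finset.univ.filter (fun i : Fin (n+2) => 1 < i) with hT
  set g := fun (i j : Fin (n+2)) => (v i * w j - v j * w i)^2 with hg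
  have key : (∑ i : Fin (n+2), ∑ j : Fin (n+2), if 1 < i ∧ i < j then g i j else 0)
      + (∑ i : Fin (n+2), ∑ j : Fin (n+2), if 1 < i ∧ i < j then g i j else 0)
      = ∑ i ∈ T, ∑ j ∈ T, g i j := by
    conv_lhs => rw [show (∑ i : Fin (n+2), ∑ j : Fin (n+2), if 1 < i ∧ i < j then g i j else 0)
        + (∑ i : Fin (n+2), ∑ j : Fin (n+2), if 1 < i ∧ i < j then g i j else 0)
      = (∑ i : Fin (n+2), ∑ j : Fin (n+2), if 1 < i ∧ i < j then g i j else 0)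
        + (∑ j : Fin (n+2), ∑ i : Fin (n+2), if 1 < i ∧ i < j then g i j else 0) by
        rw [Finset.sum_comm]]
    rw [← Finset.sum_add_distrib]
    simp only [← Finset.sum_add_distrib]
    have hpt : ∀ i j : Fin (n+2), ((if 1 < i ∧ i < j then g i j else 0)
        + (if 1 < j ∧ j < i then g j i else 0)) = if 1 < i ∧ 1 < j then g i j else 0 := by
      intro i j
      have hsymm : g j i = g i j := by simp only [hg]; ring
      have hdiag : g i i = 0 := by simp only [hg]; ring
      rcases lt_trichotomy i j with h | h | h
      · by_cases h1 : 1 < i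
        · have h2 : 1 < j := h1.trans h
          simp [h1, h2, h, not_lt.mpr h.le, hsymm]
        · have : ¬ (1 < i ∧ 1 < j) := fun hc => h1 hc.1
          simp only [h1, false_and, if_false, this, zero_add]
          rw [if_neg (fun hc : 1 < j ∧ j < i => absurd (h.trans hc.2) (lt_irrefl i))]
      · subst h; simp [hdiag, lt_irrefl]
      · by_cases h1 : 1 < j
        · have h2 : 1 < i := h1.trans h
          simp [h1, h2, h, not_lt.mpr h.le, hsymm]
        · have : ¬ (1 < i ∧ 1 < j) := fun hc => h1 hc.2
          have h2 : ¬ (1 < j ∧ j < i) := fun hc => h1 hc.1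
          simp only [h2, if_false, this, add_zero]
          rw [if_neg (fun hc : 1 < i ∧ i < j => absurd (h.trans hc.2) (lt_irrefl j))]
    rw [Finset.sum_congr rfl (fun i _ => Finset.sum_congr rfl (fun j _ => hpt i j))]
    rw [hT]
    rw [Finset.sum_filter]
    refine Finset.sum_congr rfl fun i _ => ?_
    by_cases h1 : 1 < i
    · simp only [h1, true_and, if_true, Finset.sum_filter]
    · simp [h1]
  rw [flatSphereK]
  congr 1
  have hlag := lagrange_sum T v w
  rw [hlag] at key
  show (∑ i : Fin (n+2), ∑ j : Fin (n+2), if 1 < i ∧ i < j then (v i * w j - v j * w i)^2 else 0) = _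
  linarith [key]

/-- For the product metric `dr² + dt² + δ² ds²_n` on `D² × S^n` with `n ≥ 2` and
`0 ≤ p ≤ n-2`, every `p`-plane `P` in the tangent space satisfies
`s_{p,n+2}(P) ≥ (n-p)(n-p-1)/δ² > 0`. -/
theorem flat_times_sphere_curvature_bound (n p : ℕ) (hn : 2 ≤ n) (hp : p ≤ n - 2)
    (δ : ℝ) (hδ : 0 < δ) :
    ∀ P : Submodule ℝ (EuclideanSpace ℝ (Fin (n + 2))), finrank ℝ P = p →
      ∀ e : Fin (n + 2 - p) → EuclideanSpace ℝ (Fin (n + 2)),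
        Orthonormal ℝ e → (∀ i, e i ∈ Pᗮ) →
          ((n - p : ℕ) : ℝ) * ((n - p - 1 : ℕ) : ℝ) / δ ^ 2 ≤
              sSum (flatSphereK n δ) e ∧
            0 < sSum (flatSphereK n δ) e := by
  intro P _ e he _
  set T := Finset.univ.filter (fun i : Fin (n+2) => 1 < i) with hT
  have hq2 : 2 ≤ n - p := by omega
  have hcard : n + 2 - p = (n - p) + 2 := by omega
  -- orthonormality as coordinate sums
  have horth : ∀ a b, (∑ i : Fin (n+2), e a i * e b i) = if a = b then (1:ℝ) else 0 := by
    intro a b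
    have h := (orthonormal_iff_ite.mp he) a b
    rw [PiLp.inner_apply] at h
    simp at h
    rw [← h]
    exact Finset.sum_congr rfl fun i _ => mul_comm _ _
  -- Gram matrix of the defect vectors
  have hgram : ∀ i j : Fin (n+2),
      (inner ℝ (EuclideanSpace.single i (1:ℝ) - ∑ a, e a i • e a)
        (EuclideanSpace.single j (1:ℝ) - ∑ a, e a j • e a) : ℝ)
      = (if j = i then (1:ℝ) else 0) - ∑ a, e a i * e a j := by
    intro i j
    rw [inner_sub_left, inner_sub_right, inner_sub_right, he.inner_sum]
    rw [inner_sum, sum_inner]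
    simp only [real_inner_smul_right, real_inner_smul_left,
      EuclideanSpace.inner_single_left, EuclideanSpace.inner_single_right,
      EuclideanSpace.single_apply, conj_trivial, one_mul, mul_one, PiLp.smul_apply, smul_eq_mul]
    have h : ∑ a : Fin (n+2-p), e a j * e a i = ∑ a : Fin (n+2-p), e a i * e a j :=
      Finset.sum_congr rfl fun a _ => mul_comm _ _
    rw [h]
    ring
  set A : ℝ := ∑ a : Fin (n+2-p), (e a 0)^2 with hA
  set B : ℝ := ∑ a : Fin (n+2-p), (e a 1)^2 with hB
  set C : ℝ := ∑ a : Fin (n+2-p), e a 0 * e a 1 with hC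
  have hA' : (∑ a : Fin (n+2-p), e a 0 * e a 0) = A :=
    Finset.sum_congr rfl fun a _ => by ring
  have hB' : (∑ a : Fin (n+2-p), e a 1 * e a 1) = B :=
    Finset.sum_congr rfl fun a _ => by ring
  have h10 : (1 : Fin (n+2)) ≠ 0 := by
    simp [Fin.ext_iff]
  -- Bessel-type bounds
  have hA1 : A ≤ 1 := by
    have h0 := real_inner_self_nonneg
      (x := EuclideanSpace.single (0 : Fin (n+2)) (1:ℝ) - ∑ a, e a 0 • e a)
    rw [hgram 0 0, if_pos rfl, hA'] at h0
    linarith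
  have hB1 : B ≤ 1 := by
    have h0 := real_inner_self_nonneg
      (x := EuclideanSpace.single (1 : Fin (n+2)) (1:ℝ) - ∑ a, e a 1 • e a)
    rw [hgram 1 1, if_pos rfl, hB'] at h0
    linarith
  have hCS : C^2 ≤ (1 - A) * (1 - B) := by
    have h0 := real_inner_mul_inner_self_le
      (EuclideanSpace.single (0 : Fin (n+2)) (1:ℝ) - ∑ a, e a 0 • e a)
      (EuclideanSpace.single (1 : Fin (n+2)) (1:ℝ) - ∑ a, e a 1 • e a)
    rw [hgram 0 1, hgram 0 0, hgram 1 1, if_pos rfl, if_pos rfl, if_neg h10,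
      hA', hB'] at h0
    calc C^2 = (0 - C) * (0 - C) := by ring
    _ ≤ (1 - A) * (1 - B) := h0
  -- splitting coordinate sums
  have hsplit : ∀ f : Fin (n+2) → ℝ, (∑ i, f i) = f 0 + f 1 + ∑ i ∈ T, f i := by
    intro f
    have h01 : Finset.univ.filter (fun i : Fin (n+2) => ¬ 1 < i) = {0, 1} := by
      ext i
      simp only [Finset.mem_filter, Finset.mem_univ, true_and, Finset.mem_insert,
        Finset.mem_singleton, not_lt, Fin.ext_iff, Fin.le_def, Fin.val_zero, Fin.val_one]
      omega
    have h := Finset.sum_filter_add_sum_filter_not Finset.univ (fun i : Fin (n+2) => 1 < i) f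
    rw [h01, Finset.sum_pair (by simpa [eq_comm] using h10)] at h
    rw [hT]
    linarith
  -- sums over the sphere block
  have hip : ∀ a b, (∑ i ∈ T, e a i * e b i)
      = (if a = b then (1:ℝ) else 0) - (e a 0 * e b 0 + e a 1 * e b 1) := by
    intro a b
    have h := horth a b
    rw [hsplit (fun i => e a i * e b i)] at h
    linarith
  have hipsq : ∀ a, (∑ i ∈ T, (e a i)^2)
      = 1 - (e a 0 * e a 0 + e a 1 * e a 1) := by
    intro a
    have h : (∑ i ∈ T, (e a i)^2) = ∑ i ∈ T, e a i * e a i :=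
      Finset.sum_congr rfl fun i _ => by ring
    rw [h, hip a a, if_pos rfl]
  -- rewrite sSum
  have hS : sSum (flatSphereK n δ) e = (1/δ^2) *
      (∑ a, ∑ b, if a ≠ b then
        ((1 - (e a 0 * e a 0 + e a 1 * e a 1)) * (1 - (e b 0 * e b 0 + e b 1 * e b 1))
          - (e a 0 * e b 0 + e a 1 * e b 1)^2) else 0) := by
    rw [sSum, Finset.mul_sum]
    refine Finset.sum_congr rfl fun a _ => ?_
    rw [Finset.mul_sum]
    refine Finset.sum_congr rfl fun b _ => ?_
    by_cases h : a = b
    · simp [h]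
    · rw [if_pos h, if_pos h, flatSphereK_eq, ← hT, hipsq a, hipsq b, hip a b, if_neg h]
      ring_nf
  -- evaluate the double sum
  set S : ℝ := (∑ a : Fin (n+2-p), ∑ b : Fin (n+2-p), if a ≠ b then
        ((1 - (e a 0 * e a 0 + e a 1 * e a 1)) * (1 - (e b 0 * e b 0 + e b 1 * e b 1))
          - (e a 0 * e b 0 + e a 1 * e b 1)^2) else 0) with hSdef
  have hSval : S = (((n-p : ℕ) : ℝ) + 2 - (A + B))^2 - (A^2 + 2*C^2 + B^2)
      - (((n-p : ℕ) : ℝ) + 2) + 2*(A + B) := by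
    rw [hSdef, sum_ite_ne']
    have hdiag : (∑ a : Fin (n+2-p),
        ((1 - (e a 0 * e a 0 + e a 1 * e a 1)) * (1 - (e a 0 * e a 0 + e a 1 * e a 1))
          - (e a 0 * e a 0 + e a 1 * e a 1)^2))
        = ∑ a : Fin (n+2-p), (1 - 2*(e a 0)^2 - 2*(e a 1)^2) :=
      Finset.sum_congr rfl fun a _ => by ring
    have hfull : (∑ a : Fin (n+2-p), ∑ b : Fin (n+2-p),
        ((1 - (e a 0 * e a 0 + e a 1 * e a 1)) * (1 - (e b 0 * e b 0 + e b 1 * e b 1))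
          - (e a 0 * e b 0 + e a 1 * e b 1)^2))
        = (∑ a : Fin (n+2-p), (1 - (e a 0 * e a 0 + e a 1 * e a 1)))^2
          - (A^2 + 2*C^2 + B^2) := by
      have h1 : ∀ a : Fin (n+2-p), (∑ b : Fin (n+2-p),
          ((1 - (e a 0 * e a 0 + e a 1 * e a 1)) * (1 - (e b 0 * e b 0 + e b 1 * e b 1))
            - (e a 0 * e b 0 + e a 1 * e b 1)^2))
          = (1 - (e a 0 * e a 0 + e a 1 * e a 1))
              * (∑ b : Fin (n+2-p), (1 - (e b 0 * e b 0 + e b 1 * e b 1)))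
            - ∑ b : Fin (n+2-p), (e a 0 * e b 0 + e a 1 * e b 1)^2 := by
        intro a
        rw [Finset.mul_sum, ← Finset.sum_sub_distrib]
      rw [Finset.sum_congr rfl fun a _ => h1 a, Finset.sum_sub_distrib,
        ← Finset.sum_mul, sum_pair_sq (fun a => e a 0) (fun a => e a 1), ← hA, ← hB, ← hC]
      ring
    rw [hdiag, hfull]
    have hones : (∑ a : Fin (n+2-p), (1 - 2*(e a 0)^2 - 2*(e a 1)^2))
        = ((n-p : ℕ) : ℝ) + 2 - 2*A - 2*B := by
      simp only [Finset.sum_sub_distrib, Finset.sum_const, Finset.card_univ,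
        Fintype.card_fin, nsmul_eq_mul, mul_one, ← Finset.mul_sum, ← hA, ← hB]
      rw [hcard]
      push_cast
      ring
    have hones2 : (∑ a : Fin (n+2-p), ((1:ℝ) - (e a 0 * e a 0 + e a 1 * e a 1)))
        = ((n-p : ℕ) : ℝ) + 2 - (A + B) := by
      have h2 : ∀ a : Fin (n+2-p), ((1:ℝ) - (e a 0 * e a 0 + e a 1 * e a 1))
          = 1 - (e a 0)^2 - (e a 1)^2 := fun a => by ring
      simp only [Finset.sum_congr rfl fun a _ => h2 a, Finset.sum_sub_distrib,
        Finset.sum_const, Finset.card_univ, Fintype.card_fin, nsmul_eq_mul, mul_one,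
        ← hA, ← hB]
      rw [hcard]
      push_cast
      ring
    rw [hones, hones2]
    ring
  -- the key lower bound
  have hq2' : (2:ℝ) ≤ ((n-p : ℕ) : ℝ) := by exact_mod_cast hq2
  have hkey : ((n-p : ℕ) : ℝ) * (((n-p : ℕ) : ℝ) - 1) ≤ S := by
    rw [hSval]
    nlinarith [hCS, hA1, hB1, hq2',
      mul_nonneg (by linarith : (0:ℝ) ≤ ((n-p : ℕ) : ℝ)) (by linarith : (0:ℝ) ≤ 2 - A - B)]
  have hcast : ((n - p - 1 : ℕ) : ℝ) = ((n-p : ℕ) : ℝ) - 1 := by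
    have : 1 ≤ n - p := by omega
    push_cast [this]
    ring
  have hδ2 : (0:ℝ) < δ^2 := by positivity
  have hbound : ((n - p : ℕ) : ℝ) * ((n - p - 1 : ℕ) : ℝ) / δ ^ 2 ≤ sSum (flatSphereK n δ) e := by
    rw [hS, hcast, div_eq_mul_inv, one_div, mul_comm ((δ^2)⁻¹) S]
    exact mul_le_mul_of_nonneg_right hkey (by positivity)
  refine ⟨hbound, lt_of_lt_of_le ?_ hbound⟩
  rw [hcast]
  have h1 : (0:ℝ) < ((n-p : ℕ) : ℝ) * (((n-p : ℕ) : ℝ) - 1) := by nlinarith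
  positivity
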